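/- Fix an integer p ≥ 1. For all non-negative integers x and y, the Grundy value of the position (x,y) in generalized Ryūō Nim for p is 𝒢((x,y)) = mod(x+y, p) + p·(⌊x/p⌋ ⊕ ⌊y/p⌋). -/

import Mathlib

/-- The minimum excluded value of a set of natural numbers. -/
noncomputable def mex (S : Set ℕ) : ℕ := sInf {n : ℕ | n ∉ S}

/-- The moves of generalized Ryūō Nim for `p` from a position `(x, y)`. -/
def ryuoMove (p : ℕ) (pos : ℕ × ℕ) : Set (ℕ × ℕ) :=
  {q | ∃ u < pos.1, q = (u, pos.2)} ∪
  {q | ∃ v < pos.2, q = (pos.1, v)} ∪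
  {q | ∃ s t : ℕ, 1 ≤ s ∧ s ≤ pos.1 ∧ 1 ≤ t ∧ t ≤ pos.2 ∧ s + t ≤ p - 1 ∧
        q = (pos.1 - s, pos.2 - t)}

namespace RyuoAux

def F (p x y : ℕ) : ℕ := (x + y) % p + p * ((x / p) ^^^ (y / p))

lemma mex_eq_of {S : Set ℕ} {v : ℕ} (hv : v ∉ S) (h : ∀ g < v, g ∈ S) : mex S = v := by
  refine le_antisymm (Nat.sInf_le hv) (le_csInf ⟨v, hv⟩ ?_)
  intro n hn
  by_contra hlt
  push_neg at hlt
  exact hn (h n hlt)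

lemma decomp {p r1 n1 r2 n2 : ℕ} (hp : 0 < p) (h1 : r1 < p) (h2 : r2 < p)
    (h : r1 + p * n1 = r2 + p * n2) : r1 = r2 ∧ n1 = n2 := by
  have hr : r1 = r2 := by
    have h' := congrArg (· % p) h
    simpa [Nat.add_mul_mod_self_left, Nat.mod_eq_of_lt h1, Nat.mod_eq_of_lt h2] using h'
  subst hr
  refine ⟨rfl, Nat.eq_of_mul_eq_mul_left hp ?_⟩
  omega

lemma sub_mod {p d S : ℕ} (hp : 0 < p) (h : d ≤ S % p) : (S - d) % p = S % p - d := by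
  have h2 : S - d = p * (S / p) + (S % p - d) := by
    have h3 := Nat.div_add_mod S p; omega
  rw [h2, Nat.mul_add_mod]
  exact Nat.mod_eq_of_lt (by have := Nat.mod_lt S hp; omega)

lemma F_eval {p : ℕ} (a i b j : ℕ) (hp : 0 < p) (hi : i < p) (hj : j < p) :
    F p (p * a + i) (p * b + j) = (i + j) % p + p * (a ^^^ b) := by
  unfold F
  have h1 : (p * a + i) / p = a := by rw [Nat.mul_add_div hp, Nat.div_eq_of_lt hi, add_zero]
  have h2 : (p * b + j) / p = b := by rw [Nat.mul_add_div hp, Nat.div_eq_of_lt hj, add_zero]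
  have h3 : (p * a + i) + (p * b + j) = p * (a + b) + (i + j) := by ring
  rw [h1, h2, h3, Nat.mul_add_mod]

lemma move_lt {p : ℕ} {x y : ℕ} {q : ℕ × ℕ} (hq : q ∈ ryuoMove p (x, y)) :
    q.1 + q.2 < x + y := by
  rcases hq with (⟨u, hu, rfl⟩ | ⟨v, hv, rfl⟩) | ⟨s, t, hs1, hsx, ht1, hty, _, rfl⟩
  · simpa using by omega
  · simpa using by omega
  · simp only
    omega

lemma claimA {p x y : ℕ} (hp : 0 < p) {q : ℕ × ℕ} (hq : q ∈ ryuoMove p (x, y)) :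
    F p q.1 q.2 ≠ F p x y := by
  have hmlt : ∀ z : ℕ, (z : ℕ) % p < p := fun z => Nat.mod_lt z hp
  rcases hq with (⟨u, hu, rfl⟩ | ⟨v, hv, rfl⟩) | ⟨s, t, hs1, hsx, ht1, hty, hst, rfl⟩
  · simp only
    intro hFeq
    unfold F at hFeq
    obtain ⟨hm, hx⟩ := decomp hp (hmlt _) (hmlt _) hFeq
    have hdiv : u / p = x / p := by
      have h' := congrArg (· ^^^ (y / p)) hx
      simpa [Nat.xor_assoc] using h'
    have hmod : u % p = x % p := Nat.ModEq.add_right_cancel' y hm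
    have : u = x := by
      calc u = p * (u / p) + u % p := (Nat.div_add_mod u p).symm
        _ = p * (x / p) + x % p := by rw [hdiv, hmod]
        _ = x := Nat.div_add_mod x p
    omega
  · simp only
    intro hFeq
    unfold F at hFeq
    obtain ⟨hm, hx⟩ := decomp hp (hmlt _) (hmlt _) hFeq
    have hdiv : v / p = y / p := by
      have h' := congrArg (fun z => (x / p) ^^^ (x / p) ^^^ z) hx
      simpa [← Nat.xor_assoc] using h'
    have hmod : v % p = y % p := by
      have hm' : v + x ≡ y + x [MOD p] := by
        unfold Nat.ModEq
        simpa [Nat.add_comm] using hm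
      exact Nat.ModEq.add_right_cancel' x hm'
    have : v = y := by
      calc v = p * (v / p) + v % p := (Nat.div_add_mod v p).symm
        _ = p * (y / p) + y % p := by rw [hdiv, hmod]
        _ = y := Nat.div_add_mod y p
    omega
  · simp only
    intro hFeq
    unfold F at hFeq
    obtain ⟨hm, -⟩ := decomp hp (hmlt _) (hmlt _) hFeq
    have hsum : (x - s) + (y - t) = (x + y) - (s + t) := by omega
    rw [hsum] at hm
    have hle : x + y - (s + t) ≤ x + y := Nat.sub_le _ _
    have hdvd : p ∣ (x + y) - ((x + y) - (s + t)) := (Nat.modEq_iff_dvd' hle).mp hm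
    have heq : (x + y) - ((x + y) - (s + t)) = s + t := by omega
    rw [heq] at hdvd
    have := Nat.le_of_dvd (by omega) hdvd
    omega

lemma claimB {p : ℕ} (hp : 0 < p) (x y g : ℕ) (hg : g < F p x y) :
    ∃ q ∈ ryuoMove p (x, y), F p q.1 q.2 = g := by
  have hx : p * (x / p) + x % p = x := Nat.div_add_mod x p
  have hy : p * (y / p) + y % p = y := Nat.div_add_mod y p
  set a := x / p with ha
  set b := y / p with hb
  set i := x % p with hi'
  set j := y % p with hj'
  have hi : i < p := Nat.mod_lt x hp
  have hj : j < p := Nat.mod_lt y hp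
  have hFxy : F p x y = (i + j) % p + p * (a ^^^ b) := by
    conv_lhs => rw [← hx, ← hy]
    exact F_eval a i b j hp hi hj
  set r := (i + j) % p with hr'
  set m := g / p with hm'
  set r' := g % p with hr''
  have hgd : r' + p * m = g := Nat.mod_add_div g p
  have hr : r < p := Nat.mod_lt _ hp
  have hrr' : r' < p := Nat.mod_lt g hp
  have hix : i ≤ x := Nat.mod_le x p
  have hjy : j ≤ y := Nat.mod_le y p
  by_cases hmn : m = a ^^^ b
  · -- same xor part, reduce the residue
    have hr'r : r' < r := by
      rw [hFxy, ← hgd, hmn] at hg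
      exact Nat.lt_of_add_lt_add_right hg
    set d := r - r' with hd
    have hd1 : 1 ≤ d := by omega
    have hdr : d ≤ r := by omega
    have hrij : r ≤ i + j := Nat.mod_le _ _
    by_cases hdj : d ≤ j
    · refine ⟨(x, y - d), Or.inl (Or.inr ⟨y - d, by omega, rfl⟩), ?_⟩
      have hyd : y - d = p * b + (j - d) := by
        rw [← hy]; exact Nat.add_sub_assoc hdj _
      simp only
      rw [hyd]
      conv_lhs => rw [← hx]
      rw [F_eval a i b (j - d) hp hi (by omega)]
      have h1 : i + (j - d) = (i + j) - d := by omega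
      rw [h1, sub_mod hp (by omega : d ≤ (i + j) % p)]
      rw [← hmn]
      omega
    · by_cases hj0 : j = 0
      · have hdi : d ≤ i := by omega
        refine ⟨(x - d, y), Or.inl (Or.inl ⟨x - d, by omega, rfl⟩), ?_⟩
        have hxd : x - d = p * a + (i - d) := by
          rw [← hx]; exact Nat.add_sub_assoc hdi _
        simp only
        rw [hxd]
        conv_lhs => rw [← hy]
        rw [F_eval a (i - d) b j hp (by omega) hj]
        have h1 : (i - d) + j = (i + j) - d := by omega
        rw [h1, sub_mod hp (by omega : d ≤ (i + j) % p)]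
        rw [← hmn]
        omega
      · have hdi : d - j ≤ i := by omega
        refine ⟨(x - (d - j), y - j),
          Or.inr ⟨d - j, j, by omega, by omega, by omega, by omega, by omega, rfl⟩, ?_⟩
        have hxd : x - (d - j) = p * a + (i - (d - j)) := by
          rw [← hx]; exact Nat.add_sub_assoc hdi _
        have hyd : y - j = p * b + (j - j) := by
          rw [← hy]; exact Nat.add_sub_assoc le_rfl _
        simp only
        rw [hxd, hyd]
        rw [F_eval a (i - (d - j)) b (j - j) hp (by omega) (by omega)]
        have h1 : (i - (d - j)) + (j - j) = (i + j) - d := by omega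
        rw [h1, sub_mod hp (by omega : d ≤ (i + j) % p)]
        rw [← hmn]
        omega
  · -- different xor part
    have hmlt : m < a ^^^ b := by
      rcases lt_or_ge m (a ^^^ b) with h | h
      · exact h
      · exfalso
        have h2 : p * (a ^^^ b) + p ≤ p * m := by
          have h3 := Nat.mul_le_mul_left p (show (a ^^^ b) + 1 ≤ m by omega)
          rw [Nat.mul_add, Nat.mul_one] at h3
          exact h3
        have hcon : F p x y < g := by
          calc F p x y = r + p * (a ^^^ b) := hFxy
            _ < p + p * (a ^^^ b) := Nat.add_lt_add_right hr _
            _ = p * (a ^^^ b) + p := Nat.add_comm _ _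
            _ ≤ p * m := h2
            _ ≤ r' + p * m := Nat.le_add_left _ _
            _ = g := hgd
        exact lt_asymm hg hcon
    rcases Nat.lt_xor_cases hmlt with h | h
    · -- h : m ^^^ b < a ; move in first coordinate
      set i' := (p + r' - j) % p with hi2
      have hi'lt : i' < p := Nat.mod_lt _ hp
      have hij' : (i' + j) % p = r' := by
        rw [hi2, Nat.mod_add_mod]
        have h4 : p + r' - j + j = p + r' := by omega
        rw [h4, Nat.add_mod_left]
        exact Nat.mod_eq_of_lt hrr'
      set x' := p * (m ^^^ b) + i' with hx2
      have hx'x : x' < x := by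
        calc x' < p * (m ^^^ b) + p := by omega
          _ = p * ((m ^^^ b) + 1) := by ring
          _ ≤ p * a := Nat.mul_le_mul_left p (by omega)
          _ ≤ x := by rw [← hx]; exact Nat.le_add_right _ _
      refine ⟨(x', y), Or.inl (Or.inl ⟨x', hx'x, rfl⟩), ?_⟩
      simp only
      conv_lhs => rw [← hy]
      rw [hx2, F_eval (m ^^^ b) i' b j hp hi'lt hj, hij', xor_cancel_right]
      exact hgd
    · -- h : m ^^^ a < b ; move in second coordinate
      set j' := (p + r' - i) % p with hj2
      have hj'lt : j' < p := Nat.mod_lt _ hp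
      have hij' : (i + j') % p = r' := by
        rw [hj2, Nat.add_comm i, Nat.mod_add_mod]
        have h4 : p + r' - i + i = p + r' := by omega
        rw [h4, Nat.add_mod_left]
        exact Nat.mod_eq_of_lt hrr'
      set y' := p * (m ^^^ a) + j' with hy2
      have hy'y : y' < y := by
        calc y' < p * (m ^^^ a) + p := by omega
          _ = p * ((m ^^^ a) + 1) := by ring
          _ ≤ p * b := Nat.mul_le_mul_left p (by omega)
          _ ≤ y := by rw [← hy]; exact Nat.le_add_right _ _
      refine ⟨(x, y'), Or.inl (Or.inr ⟨y', hy'y, rfl⟩), ?_⟩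
      simp only
      conv_lhs => rw [← hx]
      rw [hy2, F_eval a i (m ^^^ a) j' hp hi hj'lt, hij']
      have hxor : a ^^^ (m ^^^ a) = m := by
        rw [Nat.xor_comm m a, ← Nat.xor_assoc, Nat.xor_self, Nat.zero_xor]
      rw [hxor]
      exact hgd

end RyuoAux

theorem stmt_0 (p : ℕ) (hp : 1 ≤ p) (G : ℕ × ℕ → ℕ)
    (hG : ∀ pos : ℕ × ℕ, G pos = mex (G '' ryuoMove p pos)) :
    ∀ x y : ℕ, G (x, y) = (x + y) % p + p * ((x / p) ^^^ (y / p)) := by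
  have hp0 : 0 < p := hp
  suffices h : ∀ n x y, x + y ≤ n → G (x, y) = RyuoAux.F p x y by
    intro x y
    have := h (x + y) x y le_rfl
    simpa [RyuoAux.F] using this
  intro n
  induction n with
  | zero =>
    intro x y hxy
    have hx0 : x = 0 := by omega
    have hy0 : y = 0 := by omega
    subst hx0; subst hy0
    rw [hG (0, 0)]
    apply RyuoAux.mex_eq_of
    · rintro ⟨q, hq, -⟩
      have := RyuoAux.move_lt hq
      omega
    · intro g hg
      exfalso
      have : RyuoAux.F p 0 0 = 0 := by simp [RyuoAux.F]
      omega
  | succ n ih =>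
    intro x y hxy
    rw [hG (x, y)]
    apply RyuoAux.mex_eq_of
    · rintro ⟨q, hq, hFq⟩
      have hlt : q.1 + q.2 < x + y := RyuoAux.move_lt hq
      have hGq : G q = RyuoAux.F p q.1 q.2 := by
        have := ih q.1 q.2 (by omega)
        simpa using this
      rw [hGq] at hFq
      exact RyuoAux.claimA hp0 hq hFq
    · intro g hg
      obtain ⟨q, hq, hF⟩ := RyuoAux.claimB hp0 x y g hg
      refine ⟨q, hq, ?_⟩
      have hlt : q.1 + q.2 < x + y := RyuoAux.move_lt hq
      have hGq : G q = RyuoAux.F p q.1 q.2 := by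
        have := ih q.1 q.2 (by omega)
        simpa using this
      rw [hGq, hF]
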